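/- arXiv:2601.21529 — 5 statements merged into one kernel-verified Lean document; each statement's English description precedes it below -/
import Mathlib

section
/- Let κ > 0, D_in, D_out ≥ 1, and let W be a real D_out × (D_in + 1) matrix with Frobenius norm ‖W‖_F ≥ 1. Let x = (x₁, x̄) ∈ ℝ^{D_in+1} be a point on the hyperboloid L_κ^{D_in} (so x₁ = √(‖x̄‖_E² + 1/κ)), and define the Chen-layer output y = (y₁, ȳ) by ȳ = Wx and y₁ = √(‖Wx‖_E² + 1/κ). Then the increase in hyperbolic distance to the origin satisfies (1/√κ)·arccosh(√κ·y₁) − (1/√κ)·arccosh(√κ·x₁) ≤ (1/√κ)·(log 2 + log(√2·‖W‖_F)). In particular, if ‖W‖_F ≤ ‖W₀‖_F + n·δ for some initial matrix W₀, step bound δ > 0 and number of steps n, the increase is at most (1/√κ)·(log 2 + log √2 + log(‖W₀‖_F + n·δ)). -/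
/-- The Lorentz (Minkowski) inner product on ambient space `ℝ^{D+1}`:
`x ∘ y = −x₁y₁ + ⟨x̄, ȳ⟩_E`, where index `0` is the time coordinate. -/
noncomputable def lprod {D : ℕ} (x y : Fin (D + 1) → ℝ) : ℝ :=
  -(x 0 * y 0) + ∑ i : Fin D, x i.succ * y i.succ

/-- The hyperboloid (Lorentz model) of curvature `−κ`:
`L_κ^D = {z : z ∘ z = −1/κ, z₁ > 0}`. -/
noncomputable def onHyperboloid {D : ℕ} (κ : ℝ) (x : Fin (D + 1) → ℝ) : Prop :=
  lprod x x = -(1 / κ) ∧ 0 < x 0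

/-- The real inverse hyperbolic cosine, `arcosh t = log (t + √(t² − 1))`. -/
noncomputable def arcosh (t : ℝ) : ℝ := Real.log (t + Real.sqrt (t ^ 2 - 1))

/-- Geodesic distance in the Lorentz model:
`d(x, y) = (1/√κ)·arccosh(−κ(x ∘ y))`. -/
noncomputable def ldist {D : ℕ} (κ : ℝ) (x y : Fin (D + 1) → ℝ) : ℝ :=
  (1 / Real.sqrt κ) * arcosh (-(κ * lprod x y))

/-- The Euclidean norm of a vector in `ℝ^n`. -/
noncomputable def euclNorm {n : ℕ} (v : Fin n → ℝ) : ℝ := Real.sqrt (∑ j, v j ^ 2)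

/-- The Frobenius norm of a real matrix. -/
noncomputable def frobNorm {m n : ℕ} (W : Matrix (Fin m) (Fin n) ℝ) : ℝ :=
  Real.sqrt (∑ i, ∑ j, W i j ^ 2)

lemma arcosh_le_log_two_mul {t : ℝ} (ht : 1 ≤ t) : arcosh t ≤ Real.log (2 * t) := by
  unfold arcosh
  have h1 : Real.sqrt (t ^ 2 - 1) ≤ t := by
    calc Real.sqrt (t ^ 2 - 1) ≤ Real.sqrt (t ^ 2) := Real.sqrt_le_sqrt (by nlinarith)
    _ = t := Real.sqrt_sq (by linarith)
  exact Real.log_le_log (by nlinarith [Real.sqrt_nonneg (t ^ 2 - 1)]) (by linarith)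

lemma log_le_arcosh {t : ℝ} (ht : 1 ≤ t) : Real.log t ≤ arcosh t :=
  Real.log_le_log (by linarith) (le_add_of_nonneg_right (Real.sqrt_nonneg _))

/-- For the Chen layer `x ↦ (√(‖Wx‖² + 1/κ), Wx)` with `‖W‖_F ≥ 1`, the
increase of hyperbolic distance to the origin is at most
`(1/√κ)·(log 2 + log(√2·‖W‖_F))`; in particular, if `‖W‖_F ≤ ‖W₀‖_F + n·δ`, then it is at
most `(1/√κ)·(log 2 + log √2 + log(‖W₀‖_F + n·δ))`. -/
theorem chen_layer_log_bound (κ : ℝ) (hκ : 0 < κ) (Din Dout : ℕ)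
    (hDin : 1 ≤ Din) (hDout : 1 ≤ Dout)
    (W : Matrix (Fin Dout) (Fin (Din + 1)) ℝ) (hW : 1 ≤ frobNorm W)
    (x : Fin (Din + 1) → ℝ)
    (hx : x 0 = Real.sqrt (euclNorm (fun i : Fin Din => x i.succ) ^ 2 + 1 / κ))
    (y1 : ℝ) (hy1 : y1 = Real.sqrt (euclNorm (W.mulVec x) ^ 2 + 1 / κ)) :
    (1 / Real.sqrt κ) * arcosh (Real.sqrt κ * y1)
        - (1 / Real.sqrt κ) * arcosh (Real.sqrt κ * x 0)
      ≤ (1 / Real.sqrt κ) * (Real.log 2 + Real.log (Real.sqrt 2 * frobNorm W)) ∧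
    ∀ (W0 : Matrix (Fin Dout) (Fin (Din + 1)) ℝ) (δ : ℝ) (n : ℕ), 0 < δ →
      frobNorm W ≤ frobNorm W0 + n * δ →
      (1 / Real.sqrt κ) * arcosh (Real.sqrt κ * y1)
          - (1 / Real.sqrt κ) * arcosh (Real.sqrt κ * x 0)
        ≤ (1 / Real.sqrt κ) *
            (Real.log 2 + Real.log (Real.sqrt 2) + Real.log (frobNorm W0 + n * δ)) := by

  set F := frobNorm W with hF
  have hF1 : (1:ℝ) ≤ F := hW
  have hF0 : (0:ℝ) < F := lt_of_lt_of_le one_pos hW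
  have hκ' : (0:ℝ) < 1 / κ := one_div_pos.mpr hκ
  set A := euclNorm (fun i : Fin Din => x i.succ) ^ 2 with hA
  have hA0 : 0 ≤ A := sq_nonneg _
  set B := euclNorm (W.mulVec x) ^ 2 with hB
  have hB0 : 0 ≤ B := sq_nonneg _
  have hx2 : x 0 ^ 2 = A + 1 / κ := by rw [hx]; exact Real.sq_sqrt (by linarith)
  have hx0 : 0 < x 0 := by rw [hx]; exact Real.sqrt_pos.mpr (by linarith)
  have hy2 : y1 ^ 2 = B + 1 / κ := by rw [hy1]; exact Real.sq_sqrt (by linarith)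
  have hy0 : 0 < y1 := by rw [hy1]; exact Real.sqrt_pos.mpr (by linarith)
  -- sum of squares decomposition
  have hsum : ∑ j, x j ^ 2 = x 0 ^ 2 + A := by
    have hAe : A = ∑ i : Fin Din, x i.succ ^ 2 := by
      rw [hA]; unfold euclNorm; exact Real.sq_sqrt (Finset.sum_nonneg fun i _ => sq_nonneg _)
    rw [hAe, Fin.sum_univ_succ]
  -- Cauchy-Schwarz
  have hF2 : F ^ 2 = ∑ i, ∑ j, W i j ^ 2 := by
    rw [hF]; unfold frobNorm
    exact Real.sq_sqrt (Finset.sum_nonneg fun i _ => Finset.sum_nonneg fun j _ => sq_nonneg _)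
  have hBe : B = ∑ i, (W.mulVec x i) ^ 2 := by
    rw [hB]; unfold euclNorm; exact Real.sq_sqrt (Finset.sum_nonneg fun i _ => sq_nonneg _)
  have hCS : B ≤ F ^ 2 * (x 0 ^ 2 + A) := by
    rw [hBe, hF2, ← hsum, Finset.sum_mul]
    apply Finset.sum_le_sum
    intro i _
    exact Finset.sum_mul_sq_le_sq_mul_sq Finset.univ (fun j => W i j) (fun j => x j)
  -- key inequality y1 ≤ √2 * F * x 0
  have hkey : y1 ≤ Real.sqrt 2 * F * x 0 := by
    have hFsq : (1:ℝ) ≤ F ^ 2 := by nlinarith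
    have hprod : 0 ≤ (F ^ 2 - 1) * (1 / κ) := mul_nonneg (by linarith) hκ'.le
    have h1 : B + 1 / κ ≤ 2 * F ^ 2 * x 0 ^ 2 := by
      have hA' : x 0 ^ 2 + A = 2 * x 0 ^ 2 - 1 / κ := by linarith
      calc B + 1 / κ ≤ F ^ 2 * (2 * x 0 ^ 2 - 1 / κ) + 1 / κ := by rw [← hA']; linarith
      _ = 2 * F ^ 2 * x 0 ^ 2 - (F ^ 2 - 1) * (1 / κ) := by ring
      _ ≤ 2 * F ^ 2 * x 0 ^ 2 := by linarith
    have h2 : Real.sqrt (2 * F ^ 2 * x 0 ^ 2) = Real.sqrt 2 * F * x 0 := by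
      rw [show 2 * F ^ 2 * x 0 ^ 2 = (Real.sqrt 2 * F * x 0) ^ 2 by
        rw [mul_pow, mul_pow, Real.sq_sqrt (by norm_num : (0:ℝ) ≤ 2)]]
      exact Real.sqrt_sq (by positivity)
    calc y1 = Real.sqrt (B + 1 / κ) := hy1
    _ ≤ Real.sqrt (2 * F ^ 2 * x 0 ^ 2) := Real.sqrt_le_sqrt h1
    _ = Real.sqrt 2 * F * x 0 := h2
  set c := Real.sqrt κ with hc
  have hc0 : 0 < c := Real.sqrt_pos.mpr hκ
  have haux : ∀ u : ℝ, 0 ≤ u → 1 ≤ c * Real.sqrt (u + 1 / κ) := by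
    intro u hu
    rw [hc, ← Real.sqrt_mul hκ.le]
    have he : κ * (u + 1 / κ) = κ * u + 1 := by field_simp
    have h1 : (1:ℝ) ≤ κ * (u + 1 / κ) := by
      rw [he]; nlinarith [mul_nonneg hκ.le hu]
    calc (1:ℝ) = Real.sqrt 1 := Real.sqrt_one.symm
    _ ≤ _ := Real.sqrt_le_sqrt h1
  have ht1 : 1 ≤ c * x 0 := by rw [hx]; exact haux A hA0
  have hs1 : 1 ≤ c * y1 := by rw [hy1]; exact haux B hB0
  -- main scalar bound
  have hmain : arcosh (c * y1) - arcosh (c * x 0) ≤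
      Real.log 2 + Real.log (Real.sqrt 2 * F) := by
    have h1 : arcosh (c * y1) ≤ Real.log (2 * (c * y1)) := arcosh_le_log_two_mul hs1
    have h2 : Real.log (c * x 0) ≤ arcosh (c * x 0) := log_le_arcosh ht1
    have h3 : Real.log (2 * (c * y1)) ≤ Real.log (2 * (Real.sqrt 2 * F * (c * x 0))) := by
      apply Real.log_le_log (by positivity)
      have : c * y1 ≤ Real.sqrt 2 * F * (c * x 0) := by
        calc c * y1 ≤ c * (Real.sqrt 2 * F * x 0) := by
              exact mul_le_mul_of_nonneg_left hkey hc0.le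
        _ = Real.sqrt 2 * F * (c * x 0) := by ring
      linarith
    have h4 : Real.log (2 * (Real.sqrt 2 * F * (c * x 0)))
        = Real.log 2 + Real.log (Real.sqrt 2 * F) + Real.log (c * x 0) := by
      rw [Real.log_mul (by norm_num) (by positivity), Real.log_mul (by positivity) (by positivity)]; ring
    linarith
  have hcinv : (0:ℝ) ≤ 1 / c := by positivity
  constructor
  · rw [← mul_sub]
    exact mul_le_mul_of_nonneg_left hmain hcinv
  · intro W0 δ n hδ hWn
    have hpos : (0:ℝ) < frobNorm W0 + n * δ := lt_of_lt_of_le hF0 hWn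
    have hlog : Real.log F ≤ Real.log (frobNorm W0 + n * δ) := Real.log_le_log hF0 hWn
    have hsplit : Real.log (Real.sqrt 2 * F) = Real.log (Real.sqrt 2) + Real.log F :=
      Real.log_mul (by positivity) hF0.ne'
    have : arcosh (c * y1) - arcosh (c * x 0) ≤
        Real.log 2 + Real.log (Real.sqrt 2) + Real.log (frobNorm W0 + n * δ) := by
      rw [hsplit] at hmain; linarith
    rw [← mul_sub]
    exact mul_le_mul_of_nonneg_left this hcinv
end

section
/- Let κ > 0, let x ∈ L_κ^D, and let v ∈ ℝ^{D+1} be spacelike, i.e. v ∘ v > 0. Let H = {z ∈ L_κ^D : z ∘ v = 0}. Then the value (1/√κ)·arcsinh(√κ·|x ∘ v| / √(v ∘ v)) is the least element of the set of distances {d(x, z) : z ∈ H}; that is, d(x, z) ≥ (1/√κ)·arcsinh(√κ·|x ∘ v| / √(v ∘ v)) for all z ∈ H, and equality is attained by some point of H. -/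
lemma lprod_comm {D : ℕ} (x y : Fin (D + 1) → ℝ) : lprod x y = lprod y x := by
  simp [lprod, mul_comm]

lemma lprod_sub_smul {D : ℕ} (x v y : Fin (D + 1) → ℝ) (t : ℝ) :
    lprod (fun i => x i - t * v i) y = lprod x y - t * lprod v y := by
  simp only [lprod, Finset.mul_sum, ← Finset.sum_sub_distrib]
  rw [show (∑ i : Fin D, (x i.succ - t * v i.succ) * y i.succ)
      = ∑ i : Fin D, (x i.succ * y i.succ - t * (v i.succ * y i.succ)) from by
    congr 1; funext i; ring]
  rw [Finset.sum_sub_distrib, ← Finset.mul_sum]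
  ring

lemma lprod_smul {D : ℕ} (x y : Fin (D + 1) → ℝ) (t : ℝ) :
    lprod (fun i => t * x i) y = t * lprod x y := by
  simp only [lprod, Finset.mul_sum]
  rw [show (∑ i : Fin D, t * x i.succ * y i.succ)
      = ∑ i : Fin D, t * (x i.succ * y i.succ) from by congr 1; funext _; ring]
  rw [← Finset.mul_sum]; ring

lemma spatial_sq {D : ℕ} (w : Fin (D + 1) → ℝ) :
    ∑ i : Fin D, w i.succ ^ 2 = lprod w w + (w 0) ^ 2 := by
  simp [lprod, sq]

lemma spatial_nonneg {D : ℕ} (w : Fin (D + 1) → ℝ) :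
    0 ≤ ∑ i : Fin D, w i.succ ^ 2 :=
  Finset.sum_nonneg fun i _ => sq_nonneg _

/-- Timelike vector pairing negatively with a future timelike vector is future. -/
lemma timelike_future {D : ℕ} (w x : Fin (D + 1) → ℝ)
    (hw : lprod w w < 0) (hx : lprod x x < 0) (hx0 : 0 < x 0)
    (hwx : lprod w x < 0) : 0 < w 0 := by
  have hCS := Finset.sum_mul_sq_le_sq_mul_sq Finset.univ
    (fun i : Fin D => w i.succ) (fun i : Fin D => x i.succ)
  set P := ∑ i : Fin D, w i.succ ^ 2 with hP
  set Q := ∑ i : Fin D, x i.succ ^ 2 with hQ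
  set S := ∑ i : Fin D, w i.succ * x i.succ with hS
  have hPv : P = lprod w w + (w 0) ^ 2 := spatial_sq w
  have hQv : Q = lprod x x + (x 0) ^ 2 := spatial_sq x
  have hP0 : 0 ≤ P := spatial_nonneg w
  have hQ0 : 0 ≤ Q := spatial_nonneg x
  have hwx' : -(w 0 * x 0) + S < 0 := hwx
  by_contra h
  push_neg at h
  have hPlt : P < w 0 ^ 2 := by nlinarith
  have hw00 : w 0 < 0 := by
    rcases lt_or_eq_of_le h with h' | h'
    · exact h'
    · exfalso; nlinarith
  have hSneg : S < 0 := by nlinarith [mul_pos_of_neg_of_neg hw00 (neg_neg_iff_pos.2 hx0)]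
  have h2 : (w 0 * x 0) ^ 2 < S ^ 2 := by
    nlinarith [mul_pos_of_neg_of_neg (show S - w 0 * x 0 < 0 by linarith)
      (show S + w 0 * x 0 < 0 by nlinarith [mul_pos_of_neg_of_neg hw00 (neg_neg_iff_pos.2 hx0)])]
  have hQlt : Q < x 0 ^ 2 := by nlinarith
  have h3 : P * Q ≤ P * x 0 ^ 2 := mul_le_mul_of_nonneg_left hQlt.le hP0
  have h4 : P * x 0 ^ 2 < w 0 ^ 2 * x 0 ^ 2 :=
    mul_lt_mul_of_pos_right hPlt (by positivity)
  nlinarith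

/-- Reverse Cauchy–Schwarz for future timelike vectors. -/
lemma rev_CS {D : ℕ} (w z : Fin (D + 1) → ℝ)
    (hw : lprod w w < 0) (hz : lprod z z < 0) (hw0 : 0 < w 0) (hz0 : 0 < z 0) :
    lprod w z ≤ -Real.sqrt (lprod w w * lprod z z) := by
  have hCS := Finset.sum_mul_sq_le_sq_mul_sq Finset.univ
    (fun i : Fin D => w i.succ) (fun i : Fin D => z i.succ)
  set P := ∑ i : Fin D, w i.succ ^ 2 with hP
  set Q := ∑ i : Fin D, z i.succ ^ 2 with hQ
  set S := ∑ i : Fin D, w i.succ * z i.succ with hS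
  have hPv : P = lprod w w + (w 0) ^ 2 := spatial_sq w
  have hQv : Q = lprod z z + (z 0) ^ 2 := spatial_sq z
  have hP0 : 0 ≤ P := spatial_nonneg w
  have hQ0 : 0 ≤ Q := spatial_nonneg z
  set a := w 0
  set b := z 0
  have hab : 0 < a * b := mul_pos hw0 hz0
  have hSab : S ≤ a * b := by
    nlinarith [mul_nonneg hP0 hQ0, sq_nonneg (S - a * b), sq_nonneg (S + a * b)]
  have key : lprod w w * lprod z z ≤ (a * b - S) ^ 2 := by
    have e1 : lprod w w = P - a ^ 2 := by linarith
    have e2 : lprod z z = Q - b ^ 2 := by linarith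
    rw [e1, e2]
    rcases eq_or_lt_of_le hP0 with hP' | hP'
    · have hS0 : S = 0 := by nlinarith [sq_nonneg S]
      rw [hS0, ← hP']
      nlinarith [sq_nonneg a, mul_nonneg (sq_nonneg a) hQ0]
    · nlinarith [sq_nonneg (a * S - P * b),
        mul_nonneg (sub_nonneg.2 hCS) (sub_nonneg.2 (show P ≤ a ^ 2 by nlinarith))]
  have h1 : Real.sqrt (lprod w w * lprod z z) ≤ a * b - S := by
    calc Real.sqrt (lprod w w * lprod z z) ≤ Real.sqrt ((a * b - S) ^ 2) :=
          Real.sqrt_le_sqrt key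
      _ = |a * b - S| := Real.sqrt_sq_eq_abs _
      _ = a * b - S := abs_of_nonneg (by linarith)
  have : lprod w z = -(a * b) + S := rfl
  linarith

lemma arcosh_mono {s t : ℝ} (hs : 1 ≤ s) (hst : s ≤ t) : arcosh s ≤ arcosh t := by
  unfold arcosh
  have h1 : 0 < s + Real.sqrt (s ^ 2 - 1) := by
    have := Real.sqrt_nonneg (s ^ 2 - 1); linarith
  exact Real.log_le_log h1
    (add_le_add hst (Real.sqrt_le_sqrt (by nlinarith)))

lemma arcosh_sqrt_one_add_sq {t : ℝ} (ht : 0 ≤ t) :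
    arcosh (Real.sqrt (1 + t ^ 2)) = Real.arsinh t := by
  unfold arcosh
  rw [Real.arsinh, Real.sq_sqrt (by positivity),
    show 1 + t ^ 2 - 1 = t ^ 2 by ring, Real.sqrt_sq ht, add_comm]

/-- For `x ∈ L_κ^D` and spacelike `v` (`v ∘ v > 0`), the value
`(1/√κ)·arcsinh(√κ·|x ∘ v|/√(v ∘ v))` is the least element of the set of distances from `x`
to points of the hyperplane `H = {z ∈ L_κ^D : z ∘ v = 0}`. -/
theorem dist_to_lorentz_hyperplane (D : ℕ) (hD : 1 ≤ D) (κ : ℝ) (hκ : 0 < κ)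
    (x : Fin (D + 1) → ℝ) (hx : onHyperboloid κ x)
    (v : Fin (D + 1) → ℝ) (hv : 0 < lprod v v) :
    IsLeast {r : ℝ | ∃ z : Fin (D + 1) → ℝ, onHyperboloid κ z ∧ lprod z v = 0 ∧
        r = ldist κ x z}
      ((1 / Real.sqrt κ) *
        Real.arsinh (Real.sqrt κ * |lprod x v| / Real.sqrt (lprod v v))) := by
  obtain ⟨hxx, hx0⟩ := hx
  have hκ' : (0:ℝ) < 1 / κ := by positivity
  have hxxneg : lprod x x < 0 := by rw [hxx]; linarith
  obtain ⟨c, hc⟩ : ∃ c, lprod x v = c := ⟨_, rfl⟩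
  obtain ⟨V, hV⟩ : ∃ V, lprod v v = V := ⟨_, rfl⟩
  have hV0 : 0 < V := hV ▸ hv
  rw [hc, hV]
  set e := Real.sqrt κ * |c| / Real.sqrt V with hedef
  have he0 : 0 ≤ e := by positivity
  -- the orthogonal component w of x
  obtain ⟨w, hwdef⟩ : ∃ w : Fin (D + 1) → ℝ, w = fun i => x i - (c / V) * v i := ⟨_, rfl⟩
  have hwv : lprod w v = 0 := by
    have h := lprod_sub_smul x v v (c / V)
    rw [← hwdef] at h
    rw [h, hc, hV]
    field_simp
    ring
  have hvw : lprod v w = 0 := (lprod_comm v w).trans hwv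
  have hwx : lprod w x = -(1 / κ) - c ^ 2 / V := by
    have h := lprod_sub_smul x v x (c / V)
    rw [← hwdef] at h
    rw [h, hxx, lprod_comm v x, hc]
    ring
  have hww : lprod w w = -(1 / κ) - c ^ 2 / V := by
    have h := lprod_sub_smul x v w (c / V)
    rw [← hwdef] at h
    rw [h, hvw, mul_zero, sub_zero, lprod_comm x w, hwx]
  have hc2V : 0 ≤ c ^ 2 / V := by positivity
  have hwwneg : lprod w w < 0 := by rw [hww]; linarith
  have hw0 : 0 < w 0 := timelike_future w x hwwneg hxxneg hx0 (by rw [hwx]; linarith)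
  -- the quantity A
  obtain ⟨A, hA⟩ : ∃ A : ℝ, A = 1 + κ * c ^ 2 / V := ⟨_, rfl⟩
  have hA0 : 0 ≤ κ * c ^ 2 / V := by positivity
  have hA1 : (1:ℝ) ≤ A := by rw [hA]; linarith
  have hApos : (0:ℝ) < A := by linarith
  have hAκ : -(1 / κ) - c ^ 2 / V = -(A / κ) := by
    rw [hA]; field_simp; ring
  have hAww : lprod w w = -(A / κ) := hww.trans hAκ
  have hwxA : lprod w x = -(A / κ) := hwx.trans hAκ
  have hsA : 0 < Real.sqrt A := Real.sqrt_pos.2 hApos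
  have hAs : Real.sqrt A * Real.sqrt A = A := Real.mul_self_sqrt hApos.le
  have hAe : A = 1 + e ^ 2 := by
    rw [hA, hedef, div_pow, mul_pow, Real.sq_sqrt hκ.le, Real.sq_sqrt hV0.le, sq_abs]
  have htarget : Real.arsinh e = arcosh (Real.sqrt A) := by
    rw [← arcosh_sqrt_one_add_sq he0, hAe]
  constructor
  · -- membership: the minimizing point
    refine ⟨fun i => (1 / Real.sqrt A) * w i, ⟨?_, ?_⟩, ?_, ?_⟩
    · rw [lprod_smul, lprod_comm, lprod_smul, hAww,
        show (1:ℝ) / Real.sqrt A * (1 / Real.sqrt A * -(A / κ))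
          = -(A / (Real.sqrt A * Real.sqrt A * κ)) from by ring, hAs]
      rw [neg_inj, div_eq_div_iff (by positivity) hκ.ne']
      ring
    · show 0 < 1 / Real.sqrt A * w 0
      exact mul_pos (by positivity) hw0
    · rw [lprod_smul, hwv, mul_zero]
    · have hxz0 : lprod x (fun i => (1 / Real.sqrt A) * w i) = -(Real.sqrt A / κ) := by
        rw [lprod_comm, lprod_smul, hwxA,
          show (1:ℝ) / Real.sqrt A * -(A / κ) = -(A / (Real.sqrt A * κ)) from by ring]
        rw [neg_inj, div_eq_div_iff (by positivity) hκ.ne']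
        linear_combination -κ * hAs
      rw [ldist, hxz0, htarget]
      congr 2
      field_simp
  · -- lower bound
    rintro r ⟨z, ⟨hzz, hz0⟩, hzv, rfl⟩
    have hzzneg : lprod z z < 0 := by rw [hzz]; linarith
    have hvz : lprod v z = 0 := (lprod_comm v z).trans hzv
    have hxz : lprod x z = lprod w z := by
      have h := lprod_sub_smul x v z (c / V)
      rw [← hwdef] at h
      rw [h, hvz, mul_zero, sub_zero]
    have hCS := rev_CS w z hwwneg hzzneg hw0 hz0
    have hprod : lprod w w * lprod z z = A / κ ^ 2 := by
      rw [hAww, hzz]; ring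
    have hsqrt : Real.sqrt (lprod w w * lprod z z) = Real.sqrt A / κ := by
      rw [hprod, Real.sqrt_div hApos.le, Real.sqrt_sq hκ.le]
    have hxzle : lprod x z ≤ -(Real.sqrt A / κ) := by
      rw [hxz]; rw [hsqrt] at hCS; exact hCS
    have hkey : Real.sqrt A ≤ -(κ * lprod x z) := by
      have h2 := mul_le_mul_of_nonneg_left hxzle hκ.le
      rw [show κ * -(Real.sqrt A / κ) = -Real.sqrt A from by field_simp] at h2
      linarith
    rw [ldist, htarget]
    have hsA1 : 1 ≤ Real.sqrt A := by nlinarith [Real.sqrt_nonneg A]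
    exact mul_le_mul_of_nonneg_left (arcosh_mono hsA1 hkey) (by positivity)
end

section
/- Let h : ℝ → ℝ be continuous at x ∈ ℝ. Then, as κ → 0⁺ (along the filter of positive reals tending to 0), the Lorentzian activation h_{Lorentzian,κ}(x) = (1/√κ)·arcsinh(√κ·h((1/√κ)·sinh(√κ·x))) tends to h(x). -/
open Filter Real

/-- Auxiliary: `arsinh u / u` extended by `1` at `0`. -/
noncomputable def arsinhRatio (u : ℝ) : ℝ := if u = 0 then 1 else Real.arsinh u / u

lemma arsinhRatio_tendsto : Filter.Tendsto arsinhRatio (nhds 0) (nhds 1) := by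
  have hd : HasDerivAt Real.arsinh 1 0 := by
    simpa using (Real.hasDerivAt_arsinh 0)
  have hslope := hasDerivAt_iff_tendsto_slope.mp hd
  have h1 : Filter.Tendsto arsinhRatio (nhdsWithin 0 {(0:ℝ)}ᶜ) (nhds 1) := by
    refine hslope.congr' ?_
    filter_upwards [self_mem_nhdsWithin] with u hu
    have hu' : u ≠ 0 := hu
    simp [slope, arsinhRatio, hu', Real.arsinh_zero, div_eq_inv_mul]
  have h2 : Filter.Tendsto arsinhRatio (pure (0:ℝ)) (nhds 1) := by
    have := tendsto_pure_nhds arsinhRatio 0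
    simpa [arsinhRatio] using this
  have := h1.sup h2
  rwa [nhdsNE_sup_pure] at this

lemma key_eq (t z : ℝ) (ht : t ≠ 0) :
    (1 / t) * Real.arsinh (t * z) = z * arsinhRatio (t * z) := by
  rcases eq_or_ne z 0 with hz | hz
  · simp [hz]
  · have htz : t * z ≠ 0 := mul_ne_zero ht hz
    simp only [arsinhRatio, htz, if_false]
    field_simp

/-- If `h : ℝ → ℝ` is continuous at `x`, then as `κ → 0⁺` the Lorentzian
activation `(1/√κ)·arcsinh(√κ·h((1/√κ)·sinh(√κ·x)))` tends to `h x`. -/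
theorem lorentzian_activation_limit (h : ℝ → ℝ) (x : ℝ) (hcont : ContinuousAt h x) :
    Filter.Tendsto
      (fun κ : ℝ =>
        (1 / Real.sqrt κ) *
          Real.arsinh (Real.sqrt κ * h ((1 / Real.sqrt κ) * Real.sinh (Real.sqrt κ * x))))
      (nhdsWithin 0 (Set.Ioi 0)) (nhds (h x)) := by
  -- Step 0 : √κ tends to 0 within Ioi 0
  have hsqrt : Filter.Tendsto (fun κ : ℝ => Real.sqrt κ)
      (nhdsWithin 0 (Set.Ioi 0)) (nhdsWithin 0 (Set.Ioi 0)) := by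
    rw [tendsto_nhdsWithin_iff]
    constructor
    · have : Filter.Tendsto Real.sqrt (nhds 0) (nhds 0) := by
        simpa using (Real.continuous_sqrt.tendsto 0)
      exact this.mono_left nhdsWithin_le_nhds
    · filter_upwards [self_mem_nhdsWithin] with κ hκ
      exact Real.sqrt_pos.mpr hκ
  -- Reduce to limit in t
  suffices key : Filter.Tendsto
      (fun t : ℝ => (1 / t) * Real.arsinh (t * h ((1 / t) * Real.sinh (t * x))))
      (nhdsWithin 0 (Set.Ioi 0)) (nhds (h x)) from key.comp hsqrt
  -- Step 1 : (1/t) * sinh (t x) → x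
  have hsinh : Filter.Tendsto (fun t : ℝ => (1 / t) * Real.sinh (t * x))
      (nhdsWithin 0 (Set.Ioi 0)) (nhds x) := by
    have hd : HasDerivAt (fun t : ℝ => Real.sinh (t * x)) x 0 := by
      have := (Real.hasDerivAt_sinh ((0:ℝ) * x)).comp 0 ((hasDerivAt_id (0:ℝ)).mul_const x)
      simpa [Function.comp_def] using this
    have hslope := hasDerivAt_iff_tendsto_slope.mp hd
    have hmono : nhdsWithin (0:ℝ) (Set.Ioi 0) ≤ nhdsWithin 0 {(0:ℝ)}ᶜ :=
      nhdsWithin_mono _ (fun t ht => ne_of_gt ht)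
    refine (hslope.mono_left hmono).congr' ?_
    filter_upwards [self_mem_nhdsWithin] with t ht
    simp [slope, ne_of_gt (Set.mem_Ioi.mp ht), div_eq_inv_mul]
  -- Step 2 : y t → h x
  have hy : Filter.Tendsto (fun t : ℝ => h ((1 / t) * Real.sinh (t * x)))
      (nhdsWithin 0 (Set.Ioi 0)) (nhds (h x)) := hcont.tendsto.comp hsinh
  -- Step 3 : t * y t → 0
  have hid : Filter.Tendsto (fun t : ℝ => t) (nhdsWithin 0 (Set.Ioi 0)) (nhds 0) :=
    tendsto_id.mono_left nhdsWithin_le_nhds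
  have hu : Filter.Tendsto (fun t : ℝ => t * h ((1 / t) * Real.sinh (t * x)))
      (nhdsWithin 0 (Set.Ioi 0)) (nhds 0) := by
    simpa using hid.mul hy
  -- Step 4 : combine
  have hA : Filter.Tendsto (fun t : ℝ => arsinhRatio (t * h ((1 / t) * Real.sinh (t * x))))
      (nhdsWithin 0 (Set.Ioi 0)) (nhds 1) := arsinhRatio_tendsto.comp hu
  have final := hy.mul hA
  rw [mul_one] at final
  refine final.congr' ?_
  filter_upwards [self_mem_nhdsWithin] with t ht
  exact (key_eq t _ (ne_of_gt ht)).symm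
end

section
/- Let κ > 0, let w ∈ ℝ^D be nonzero, and let b ∈ ℝ. Define v = (v₁, v̄) ∈ ℝ^{D+1} by v₁ = ‖w‖_E·sinh(−√κ·b/‖w‖_E) and v̄ = cosh(−√κ·b/‖w‖_E)·w. Then: (i) v ∘ v = −v₁² + ‖v̄‖_E² = ‖w‖_E² > 0; (ii) w = (√(v ∘ v)/‖v̄‖_E)·v̄; and (iii) b = −(√(v ∘ v)/√κ)·arcsinh(v₁/√(v ∘ v)). In particular, the map (w, b) ↦ v is invertible on the set where ‖w‖_E > 0. -/
lemma euclNorm_pos {n : ℕ} {w : Fin n → ℝ} (hw : w ≠ 0) : 0 < euclNorm w := by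
  apply Real.sqrt_pos.2
  have : ∃ j, w j ≠ 0 := by
    by_contra h; push_neg at h; exact hw (funext h)
  obtain ⟨j, hj⟩ := this
  exact Finset.sum_pos' (fun i _ => sq_nonneg _) ⟨j, Finset.mem_univ j, by positivity⟩

lemma sq_euclNorm {n : ℕ} (w : Fin n → ℝ) : euclNorm w ^ 2 = ∑ j, w j ^ 2 :=
  Real.sq_sqrt (Finset.sum_nonneg fun i _ => sq_nonneg _)

lemma recover (D : ℕ) (κ : ℝ) (hκ : 0 < κ)
    (w : Fin D → ℝ) (hw : w ≠ 0) (b : ℝ) (v : Fin (D + 1) → ℝ)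
    (hv0 : v 0 = euclNorm w * Real.sinh (-(Real.sqrt κ * b) / euclNorm w))
    (hvs : ∀ i : Fin D, v i.succ = Real.cosh (-(Real.sqrt κ * b) / euclNorm w) * w i) :
    lprod v v = euclNorm w ^ 2 ∧
    (∀ i : Fin D,
      w i = (Real.sqrt (lprod v v) / euclNorm (fun j : Fin D => v j.succ)) * v i.succ) ∧
    b = -(Real.sqrt (lprod v v) / Real.sqrt κ) *
          Real.arsinh (v 0 / Real.sqrt (lprod v v)) := by
  set nw := euclNorm w with hnwdef
  have hnw : 0 < nw := euclNorm_pos hw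
  set c := -(Real.sqrt κ * b) / nw with hc
  have hsum : ∑ i : Fin D, v i.succ * v i.succ = Real.cosh c ^ 2 * ∑ i, w i ^ 2 := by
    rw [Finset.mul_sum]
    exact Finset.sum_congr rfl fun i _ => by rw [hvs i]; ring
  have hwsum : ∑ i, w i ^ 2 = nw ^ 2 := (sq_euclNorm w).symm
  have hlv : lprod v v = nw ^ 2 := by
    rw [lprod, hsum, hwsum, hv0]
    have := Real.cosh_sq_sub_sinh_sq c
    nlinarith [this]
  have hsq : Real.sqrt (lprod v v) = nw := by
    rw [hlv, Real.sqrt_sq hnw.le]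
  have hcpos : 0 < Real.cosh c := Real.cosh_pos c
  have hnv : euclNorm (fun j : Fin D => v j.succ) = Real.cosh c * nw := by
    rw [euclNorm]
    have : ∑ j : Fin D, v j.succ ^ 2 = (Real.cosh c * nw) ^ 2 := by
      have h2 : ∑ j : Fin D, v j.succ ^ 2 = ∑ j : Fin D, v j.succ * v j.succ :=
        Finset.sum_congr rfl fun i _ => by ring
      rw [h2, hsum, hwsum]; ring
    rw [this, Real.sqrt_sq (by positivity)]
  refine ⟨hlv, fun i => ?_, ?_⟩
  · rw [hsq, hnv, hvs i]
    field_simp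
  · rw [hsq, hv0]
    rw [mul_comm nw, mul_div_assoc, div_self hnw.ne', mul_one, Real.arsinh_sinh, hc]
    have hκ' : Real.sqrt κ ≠ 0 := (Real.sqrt_pos.2 hκ).ne'
    field_simp

/-- For nonzero `w` and bias `b`, the transported vector `v` with
`v₁ = ‖w‖·sinh(−√κ·b/‖w‖)` and `v̄ = cosh(−√κ·b/‖w‖)·w` is spacelike with
`v ∘ v = ‖w‖²`, and `(w, b)` can be recovered from `v`:
`w = (√(v ∘ v)/‖v̄‖)·v̄` and `b = −(√(v ∘ v)/√κ)·arcsinh(v₁/√(v ∘ v))`.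
In particular, the map `(w, b) ↦ v` is invertible on the set where `‖w‖ > 0`. -/
theorem cache_inverse (D : ℕ) (κ : ℝ) (hκ : 0 < κ)
    (w : Fin D → ℝ) (hw : w ≠ 0) (b : ℝ) (v : Fin (D + 1) → ℝ)
    (hv0 : v 0 = euclNorm w * Real.sinh (-(Real.sqrt κ * b) / euclNorm w))
    (hvs : ∀ i : Fin D, v i.succ = Real.cosh (-(Real.sqrt κ * b) / euclNorm w) * w i) :
    (lprod v v = -(v 0) ^ 2 + euclNorm (fun i : Fin D => v i.succ) ^ 2 ∧
      lprod v v = euclNorm w ^ 2 ∧ 0 < lprod v v) ∧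
    (∀ i : Fin D,
      w i = (Real.sqrt (lprod v v) / euclNorm (fun j : Fin D => v j.succ)) * v i.succ) ∧
    b = -(Real.sqrt (lprod v v) / Real.sqrt κ) *
          Real.arsinh (v 0 / Real.sqrt (lprod v v)) ∧
    (∀ (w' : Fin D → ℝ) (b' : ℝ), w' ≠ 0 →
      v 0 = euclNorm w' * Real.sinh (-(Real.sqrt κ * b') / euclNorm w') →
      (∀ i : Fin D, v i.succ = Real.cosh (-(Real.sqrt κ * b') / euclNorm w') * w' i) →
      w' = w ∧ b' = b) := by
  obtain ⟨hlv, hwrec, hbrec⟩ := recover D κ hκ w hw b v hv0 hvs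
  refine ⟨⟨?_, hlv, ?_⟩, hwrec, hbrec, ?_⟩
  · rw [lprod, sq_euclNorm]
    have h2 : ∑ j : Fin D, (fun i : Fin D => v i.succ) j ^ 2
        = ∑ j : Fin D, v j.succ * v j.succ :=
      Finset.sum_congr rfl fun i _ => by ring
    rw [h2]; ring
  · rw [hlv]
    have := euclNorm_pos hw
    positivity
  · intro w' b' hw' hv0' hvs'
    obtain ⟨_, hwrec', hbrec'⟩ := recover D κ hκ w' hw' b' v hv0' hvs'
    exact ⟨funext fun i => (hwrec' i).trans (hwrec i).symm, hbrec'.trans hbrec.symm⟩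
end

section
/- Let κ > 0, let w ∈ ℝ^D have ‖w‖_E = 1, and let b ∈ ℝ. Let v = (sinh(−√κ·b), cosh(−√κ·b)·w) ∈ ℝ^{D+1} and let o = (1/√κ, 0, …, 0) be the origin of L_κ^D. Define the single-neuron FGG-LNN output with identity activation applied to input o as the point y = (y₁, ȳ) ∈ ℝ² with ȳ = o ∘ v and y₁ = √(1/κ + ȳ²). Then ȳ = (1/√κ)·sinh(√κ·b), y₁ = (1/√κ)·cosh(√κ·b), y ∈ L_κ^1, and the hyperbolic distance from y to the origin of L_κ^1 equals |b|. In particular, the hyperbolic norm of the output grows linearly in the bias parameter b. -/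
lemma arcosh_cosh (t : ℝ) : arcosh (Real.cosh t) = |t| := by
  unfold arcosh
  have h1 : Real.cosh t ^ 2 - 1 = Real.sinh t ^ 2 := by
    have := Real.cosh_sq t; linarith
  rw [h1, Real.sqrt_sq_eq_abs]
  have h2 : Real.cosh t + |Real.sinh t| = Real.exp |t| := by
    rw [← Real.cosh_abs t, Real.abs_sinh t, Real.cosh_eq, Real.sinh_eq]
    ring
  rw [h2, Real.log_exp]

/-- For a unit weight `w` and bias `b`, the single-neuron FGG-LNN layer
with identity activation applied to the origin `o` outputs
`y = (√(1/κ + ȳ²), ȳ)` with `ȳ = o ∘ v`; then `ȳ = (1/√κ)·sinh(√κ·b)`,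
`y₁ = (1/√κ)·cosh(√κ·b)`, `y ∈ L_κ^1`, and the hyperbolic distance from `y` to the origin
of `L_κ^1` equals `|b|`: the hyperbolic norm of the output grows linearly in `b`. -/
theorem fgg_lnn_linear_growth (D : ℕ) (hD : 1 ≤ D) (κ : ℝ) (hκ : 0 < κ)
    (w : Fin D → ℝ) (hw : euclNorm w = 1) (b : ℝ)
    (v o : Fin (D + 1) → ℝ)
    (hv : v = Fin.cons (Real.sinh (-(Real.sqrt κ * b)))
        (fun i : Fin D => Real.cosh (-(Real.sqrt κ * b)) * w i))
    (ho : o = Fin.cons (1 / Real.sqrt κ) (0 : Fin D → ℝ))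
    (ybar : ℝ) (hybar : ybar = lprod o v)
    (y : Fin 2 → ℝ) (hy : y = ![Real.sqrt (1 / κ + ybar ^ 2), ybar])
    (o1 : Fin 2 → ℝ) (ho1 : o1 = ![1 / Real.sqrt κ, 0]) :
    ybar = (1 / Real.sqrt κ) * Real.sinh (Real.sqrt κ * b) ∧
    y 0 = (1 / Real.sqrt κ) * Real.cosh (Real.sqrt κ * b) ∧
    onHyperboloid (D := 1) κ y ∧
    ldist (D := 1) κ y o1 = |b| := by
  set s := Real.sqrt κ with hs
  have hs0 : 0 < s := Real.sqrt_pos.mpr hκ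
  have hs2 : s ^ 2 = κ := Real.sq_sqrt hκ.le
  set t := s * b with ht
  -- ybar
  have h1 : ybar = (1 / s) * Real.sinh t := by
    rw [hybar, ho, hv]
    simp [lprod, Real.sinh_neg]
  -- y0
  have harg : 1 / κ + ybar ^ 2 = (Real.cosh t / s) ^ 2 := by
    rw [h1]
    have := Real.cosh_sq t
    field_simp [← hs2]
    rw [hs2, this]; ring
  have h2 : y 0 = (1 / s) * Real.cosh t := by
    rw [hy]
    simp only [Matrix.cons_val_zero]
    rw [harg, Real.sqrt_sq (by positivity)]
    ring
  refine ⟨h1, h2, ?_, ?_⟩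
  · constructor
    · have hy1 : y 1 = ybar := by rw [hy]; simp
      have hy0sq : y 0 ^ 2 = 1 / κ + ybar ^ 2 := by
        rw [hy]
        simp only [Matrix.cons_val_zero]
        rw [Real.sq_sqrt]
        rw [harg]; positivity
      simp only [lprod, Fin.sum_univ_one]
      have : (0 : Fin 1).succ = (1 : Fin 2) := rfl
      rw [this, hy1]
      nlinarith [hy0sq]
    · rw [h2]; positivity
  · have hlp : lprod y o1 = -(Real.cosh t / κ) := by
      simp only [lprod, Fin.sum_univ_one]
      have h01 : (0 : Fin 1).succ = (1 : Fin 2) := rfl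
      rw [h01, ho1, h2]
      simp only [Matrix.cons_val_zero, Matrix.cons_val_one, Matrix.head_cons]
      rw [mul_zero]
      rw [← hs2]
      ring
    rw [ldist, hlp]
    have : -(κ * -(Real.cosh t / κ)) = Real.cosh t := by field_simp
    rw [this, arcosh_cosh, ht, abs_mul, abs_of_pos hs0]
    field_simp
    rfl
end
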